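/- arXiv:2007.07030 — 3 statements merged into one kernel-verified Lean document; each statement's English description precedes it below -/
import Mathlib

section
/- For every integer n ≥ 1 and every integer m ≥ 1, the m-th positive zero j_{n+1/2,m} of the Bessel function J_{n+1/2} satisfies j_{n+1/2,m} > (m−1)π + √((n+1/2)(n+5/2)); consequently, j_{n+1/2,m}² > (m−1)²π² + (n+1/2)(n+5/2). -/
set_option maxHeartbeats 1000000

/-- `sbJ k x = J_{k - 1/2}(x)`, the Bessel function of the first kind of half-integer
order, defined from `J_{-1/2}(x) = √(2/(πx)) cos x`, `J_{1/2}(x) = √(2/(πx)) sin x`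
and the recurrence `J_{ν+1}(x) = (2ν/x) J_ν(x) − J_{ν−1}(x)`. -/
noncomputable def sbJ : ℕ → ℝ → ℝ
  | 0, x => Real.sqrt (2 / (Real.pi * x)) * Real.cos x
  | 1, x => Real.sqrt (2 / (Real.pi * x)) * Real.sin x
  | (k + 2), x => ((2 * (k : ℝ) + 1) / x) * sbJ (k + 1) x - sbJ k x

/-- trig part of `sbJ`: Riccati–Bessel functions (shifted index). -/
noncomputable def rb : ℕ → ℝ → ℝ
  | 0, x => Real.cos x
  | 1, x => Real.sin x
  | (k + 2), x => ((2 * (k : ℝ) + 1) / x) * rb (k + 1) x - rb k x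

lemma rb_rec (k : ℕ) (x : ℝ) :
    rb (k + 2) x = ((2 * (k : ℝ) + 1) / x) * rb (k + 1) x - rb k x := rfl

lemma sbJ_eq_rb (k : ℕ) (x : ℝ) : sbJ k x = Real.sqrt (2 / (Real.pi * x)) * rb k x := by
  induction k using Nat.twoStepInduction with
  | zero => rfl
  | one => rfl
  | more k ih1 ih2 =>
      show ((2 * (k : ℝ) + 1) / x) * sbJ (k + 1) x - sbJ k x = _
      rw [ih2, ih1, rb_rec]; ring

lemma rb_hasDerivAt (k : ℕ) (x : ℝ) (hx : x ≠ 0) :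
    HasDerivAt (rb (k + 1)) (rb k x - ((k : ℝ) / x) * rb (k + 1) x) x := by
  induction k using Nat.twoStepInduction generalizing x with
  | zero =>
      simpa [show rb 1 = Real.sin from rfl, show rb 0 x = Real.cos x from rfl] using Real.hasDerivAt_sin x
  | one =>
      have hfun : rb 2 = fun y : ℝ => ((1 : ℝ) / y) * Real.sin y - Real.cos y := by
        funext y; show ((2 * ((0:ℕ) : ℝ) + 1) / y) * rb 1 y - rb 0 y = _; norm_num [rb]
      rw [hfun]
      have h1 : HasDerivAt (fun y : ℝ => (1 : ℝ) / y) ((0 * x - 1 * 1) / x ^ 2) x :=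
        (hasDerivAt_const x (1:ℝ)).div (hasDerivAt_id x) hx
      have h2 := (h1.mul (Real.hasDerivAt_sin x)).sub (Real.hasDerivAt_cos x)
      refine h2.congr_deriv ?_
      simp only [rb, hfun]
      push_cast
      field_simp
      ring
  | more k ih1 ih2 =>
      have hfun : rb (k + 3) =
          fun y : ℝ => ((2 * ((k:ℝ) + 1) + 1) / y) * rb (k + 2) y - rb (k + 1) y := by
        funext y; rw [show k + 3 = (k + 1) + 2 from rfl, rb_rec]; push_cast; ring_nf
      rw [hfun]
      have hc : HasDerivAt (fun y : ℝ => (2 * ((k:ℝ) + 1) + 1) / y)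
          ((0 * x - (2 * ((k:ℝ) + 1) + 1) * 1) / x ^ 2) x :=
        (hasDerivAt_const x _).div (hasDerivAt_id x) hx
      have h2 := (hc.mul (ih2 x hx)).sub (ih1 x hx)
      refine h2.congr_deriv ?_
      simp only [show k + 1 + 1 = k + 2 from rfl]
      have hrec := rb_rec k x
      rw [hrec]
      push_cast
      field_simp
      ring

/-- The Riccati–Bessel ODE: with `u = rb (k+2)` and `u' y = rb (k+1) y - ((k+1)/y) u y`
(which is the derivative of `u`), we have `u'' = ((k+1)(k+2)/x² - 1) u`. -/
lemma rb_deriv2 (k : ℕ) (x : ℝ) (hx : x ≠ 0) :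
    HasDerivAt (fun y => rb (k + 1) y - (((k : ℝ) + 1) / y) * rb (k + 2) y)
      (((((k : ℝ) + 1) * ((k : ℝ) + 2)) / x ^ 2 - 1) * rb (k + 2) x) x := by
  have h1 := rb_hasDerivAt k x hx
  have h2 := rb_hasDerivAt (k + 1) x hx
  have hc : HasDerivAt (fun y : ℝ => ((k : ℝ) + 1) / y)
      ((0 * x - ((k : ℝ) + 1) * 1) / x ^ 2) x :=
    (hasDerivAt_const x _).div (hasDerivAt_id x) hx
  have h3 := h1.sub (hc.mul (by exact_mod_cast h2))
  refine h3.congr_deriv ?_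
  simp only [show k + 1 + 1 = k + 2 from rfl]
  have hrec := rb_rec k x
  rw [hrec]
  push_cast
  field_simp
  ring

lemma rb_tendsto_zero (k : ℕ) :
    Filter.Tendsto (fun x : ℝ => x ^ k * rb (k + 1) x) (nhdsWithin 0 (Set.Ioi 0)) (nhds 0) := by
  induction k using Nat.twoStepInduction with
  | zero =>
      have : Filter.Tendsto Real.sin (nhdsWithin 0 (Set.Ioi 0)) (nhds 0) := by
        simpa using (Real.continuous_sin.tendsto 0).mono_left nhdsWithin_le_nhds
      refine this.congr (fun x => ?_)
      simp [rb]
  | one =>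
      have h : Filter.Tendsto (fun x : ℝ => Real.sin x - x * Real.cos x)
          (nhdsWithin 0 (Set.Ioi 0)) (nhds 0) := by
        have := ((Real.continuous_sin.sub (continuous_id.mul Real.continuous_cos)).tendsto 0)
        exact (by simpa using this.mono_left (nhdsWithin_le_nhds (s := Set.Ioi 0)) :
          Filter.Tendsto (Real.sin - id * Real.cos) (nhdsWithin 0 (Set.Ioi 0)) (nhds 0))
      refine h.congr' ?_
      filter_upwards [self_mem_nhdsWithin] with x (hx : (0:ℝ) < x)
      show Real.sin x - x * Real.cos x = x ^ 1 * rb 2 x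
      rw [rb_rec]
      simp [rb]
      field_simp
  | more k ih1 ih2 =>
      have h : Filter.Tendsto
          (fun x : ℝ => (2 * (k : ℝ) + 3) * (x ^ (k + 1) * rb (k + 2) x)
            - x ^ 2 * (x ^ k * rb (k + 1) x)) (nhdsWithin 0 (Set.Ioi 0)) (nhds 0) := by
        have t2 : Filter.Tendsto (fun x : ℝ => x ^ 2) (nhdsWithin 0 (Set.Ioi 0)) (nhds 0) := by
          simpa using ((continuous_pow 2).tendsto (0:ℝ)).mono_left nhdsWithin_le_nhds
        simpa using ((ih2.const_mul (2 * (k : ℝ) + 3)).sub (t2.mul ih1))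
      refine h.congr' ?_
      filter_upwards [self_mem_nhdsWithin] with x (hx : (0:ℝ) < x)
      have hrec : rb (k + 3) x = ((2 * ((k:ℝ) + 1) + 1) / x) * rb (k + 2) x - rb (k + 1) x := by
        rw [show k + 3 = (k + 1) + 2 from rfl, rb_rec]; push_cast; ring
      show _ = x ^ (k + 2) * rb (k + 3) x
      rw [hrec]
      field_simp
      ring

lemma h_hasDerivAt (n : ℕ) (y : ℝ) (hy : y ≠ 0) :
    HasDerivAt (fun t => t ^ (n + 1) * rb (n + 2) t) (y ^ (n + 1) * rb (n + 1) y) y := by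
  have h := (hasDerivAt_pow (n + 1) y).mul (rb_hasDerivAt (n + 1) y hy)
  refine h.congr_deriv ?_
  simp only [show n + 1 + 1 = n + 2 from rfl]
  push_cast
  field_simp
  ring

lemma rb_pos_le (n : ℕ) : ∀ x : ℝ, 0 < x → x ≤ 1 → 0 < rb (n + 1) x ∧ rb (n + 1) x ≤ x := by
  induction n with
  | zero =>
      intro x hx hx1
      constructor
      · exact Real.sin_pos_of_pos_of_lt_pi hx (lt_of_le_of_lt hx1 (by
          have := Real.pi_gt_three; linarith))
      · exact (Real.sin_lt hx).le
  | succ n ih =>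
      intro x hx hx1
      simp only [show n + 1 + 1 = n + 2 from rfl]
      set h : ℝ → ℝ := fun t => t ^ (n + 1) * rb (n + 2) t with hh
      have hmono : StrictMonoOn h (Set.Ioc 0 1) := by
        refine strictMonoOn_of_deriv_pos (convex_Ioc 0 1) ?_ ?_
        · intro y hy
          exact ((h_hasDerivAt n y (ne_of_gt hy.1)).continuousAt).continuousWithinAt
        · intro y hy
          rw [interior_Ioc] at hy
          rw [(h_hasDerivAt n y (ne_of_gt hy.1)).deriv]
          exact mul_pos (pow_pos hy.1 _) (ih y hy.1 hy.2.le).1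
      have hlim : Filter.Tendsto h (nhdsWithin 0 (Set.Ioi 0)) (nhds 0) := rb_tendsto_zero (n + 1)
      have hnonneg : ∀ y : ℝ, 0 < y → y ≤ 1 → 0 ≤ h y := by
        intro y hy hy1
        refine le_of_tendsto hlim ?_
        filter_upwards [Ioo_mem_nhdsGT_of_mem (Set.mem_Ico.2 ⟨le_refl 0, hy⟩)] with t ht
        exact (hmono (Set.mem_Ioc.2 ⟨ht.1, le_trans ht.2.le hy1⟩)
          (Set.mem_Ioc.2 ⟨hy, hy1⟩) ht.2).le
      have hpos : 0 < h x := lt_of_le_of_lt (hnonneg (x/2) (by linarith) (by linarith))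
        (hmono (Set.mem_Ioc.2 ⟨by linarith, by linarith⟩) (Set.mem_Ioc.2 ⟨hx, hx1⟩) (by linarith))
      -- upper bound via g
      set g : ℝ → ℝ := fun t => t ^ (n + 3) / (n + 3) - h t with hg
      have hgd : ∀ y : ℝ, 0 < y → y ≤ 1 →
          HasDerivAt g (y ^ (n + 2) - y ^ (n + 1) * rb (n + 1) y) y := by
        intro y hy hy1
        have h1 : HasDerivAt (fun t : ℝ => t ^ (n + 3) / (n + 3)) (y ^ (n + 2)) y := by
          have := (hasDerivAt_pow (n + 3) y).div_const ((n : ℝ) + 3)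
          refine this.congr_deriv ?_
          push_cast
          field_simp
        exact h1.sub (h_hasDerivAt n y (ne_of_gt hy))
      have hgmono : MonotoneOn g (Set.Ioc 0 1) := by
        refine monotoneOn_of_deriv_nonneg (convex_Ioc 0 1) ?_ ?_ ?_
        · intro y hy
          exact ((hgd y hy.1 hy.2).continuousAt).continuousWithinAt
        · intro y hy
          rw [interior_Ioc] at hy
          exact (hgd y hy.1 hy.2.le).differentiableAt.differentiableWithinAt
        · intro y hy
          rw [interior_Ioc] at hy
          rw [(hgd y hy.1 hy.2.le).deriv]
          have := (ih y hy.1 hy.2.le).2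
          have hy1 : (0:ℝ) < y ^ (n + 1) := pow_pos hy.1 _
          have e := mul_le_mul_of_nonneg_left this hy1.le
          have e2 : y ^ (n + 2) = y ^ (n + 1) * y := pow_succ y (n + 1)
          linarith
      have hglim : Filter.Tendsto g (nhdsWithin 0 (Set.Ioi 0)) (nhds 0) := by
        have hp : Filter.Tendsto (fun t : ℝ => t ^ (n + 3) / (n + 3))
            (nhdsWithin 0 (Set.Ioi 0)) (nhds 0) := by
          have := ((continuous_pow (n + 3)).div_const ((n : ℝ) + 3)).tendsto (0 : ℝ)
          simpa using this.mono_left nhdsWithin_le_nhds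
        simpa using hp.sub hlim
      have hgx : 0 ≤ g x := by
        refine le_of_tendsto hglim ?_
        filter_upwards [Ioo_mem_nhdsGT_of_mem (Set.mem_Ico.2 ⟨le_refl 0, hx⟩)] with t ht
        exact hgmono (Set.mem_Ioc.2 ⟨ht.1, le_trans ht.2.le hx1⟩)
          (Set.mem_Ioc.2 ⟨hx, hx1⟩) ht.2.le
      have hxp : (0:ℝ) < x ^ (n + 1) := pow_pos hx _
      constructor
      · by_contra hcon
        push_neg at hcon
        have hmn := mul_nonneg hxp.le (neg_nonneg.2 hcon)
        rw [mul_neg] at hmn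
        have hx2 : h x = x ^ (n + 1) * rb (n + 2) x := rfl
        linarith
      · have e0 : h x ≤ x ^ (n + 3) / ((n : ℝ) + 3) := by
          have := hgx; simp only [hg] at this; linarith
        have e1 : x ^ (n + 3) ≤ x ^ (n + 2) := pow_le_pow_of_le_one hx.le hx1 (by omega)
        have e2 : x ^ (n + 3) / ((n : ℝ) + 3) ≤ x ^ (n + 3) := by
          apply div_le_self (pow_nonneg hx.le _)
          have : (0:ℝ) ≤ (n:ℝ) := Nat.cast_nonneg n
          linarith
        have e3 : x ^ (n + 1) * rb (n + 2) x ≤ x ^ (n + 1) * x := by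
          have : x ^ (n + 2) = x ^ (n + 1) * x := pow_succ x (n + 1)
          have hx2 : h x = x ^ (n + 1) * rb (n + 2) x := rfl
          linarith
        exact le_of_mul_le_mul_left e3 hxp

lemma deriv_nonpos_at_right_zero {f : ℝ → ℝ} {d a b : ℝ} (hab : a < b)
    (hd : HasDerivAt f d b) (hfb : f b = 0)
    (hpos : ∀ x ∈ Set.Ioo a b, 0 < f x) : d ≤ 0 := by
  rw [hasDerivAt_iff_tendsto_slope] at hd
  have hd2 : Filter.Tendsto (slope f b) (nhdsWithin b (Set.Iio b)) (nhds d) :=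
    hd.mono_left (nhdsWithin_mono b (fun y hy => ne_of_lt hy))
  refine le_of_tendsto hd2 ?_
  filter_upwards [Ioo_mem_nhdsLT_of_mem (Set.mem_Ioc.2 ⟨hab, le_refl b⟩)] with y hy
  have h1 : 0 < f y := hpos y hy
  have h2 : y - b < 0 := by linarith [hy.2]
  rw [slope_def_field]
  simp only [hfb]
  rw [div_nonpos_iff]
  left
  constructor <;> linarith

section sturm

variable (k : ℕ) (f f' : ℝ → ℝ)
  (hf : ∀ x : ℝ, x ≠ 0 → HasDerivAt f (f' x) x)
  (hf' : ∀ x : ℝ, x ≠ 0 → HasDerivAt f'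
    (((((k:ℝ) + 1) * ((k:ℝ) + 2)) / x ^ 2 - 1) * f x) x)

include hf hf' in
/-- Sturm comparison: consecutive zeros of a solution are more than `π` apart. -/
lemma sturm_gap (a b : ℝ) (ha : 0 < a) (hab : a < b) (hfa : f a = 0) (hfb : f b = 0)
    (hpos : ∀ x ∈ Set.Ioo a b, 0 < f x) : a + Real.pi < b := by
  by_contra hcon
  push_neg at hcon
  set L : ℝ := ((k:ℝ) + 1) * ((k:ℝ) + 2) with hL
  have hLpos : 0 < L := by positivity
  set W : ℝ → ℝ := fun y => f y * Real.cos (y - a) - f' y * Real.sin (y - a) with hW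
  have hWd : ∀ x : ℝ, 0 < x → HasDerivAt W (-(L / x ^ 2) * f x * Real.sin (x - a)) x := by
    intro x hx
    have hid : HasDerivAt (fun y : ℝ => y - a) 1 x := (hasDerivAt_id x).sub_const a
    have hsin : HasDerivAt (fun y : ℝ => Real.sin (y - a)) (Real.cos (x - a)) x := by
      exact ((Real.hasDerivAt_sin (x - a)).comp x hid).congr_deriv (mul_one _)
    have hcos : HasDerivAt (fun y : ℝ => Real.cos (y - a)) (-Real.sin (x - a)) x := by
      exact ((Real.hasDerivAt_cos (x - a)).comp x hid).congr_deriv (mul_one _)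
    have h := ((hf x (ne_of_gt hx)).mul hcos).sub ((hf' x (ne_of_gt hx)).mul hsin)
    refine h.congr_deriv ?_
    ring
  have hanti : StrictAntiOn W (Set.Icc a b) := by
    refine strictAntiOn_of_deriv_neg (convex_Icc a b) ?_ ?_
    · intro x hx
      exact ((hWd x (lt_of_lt_of_le ha hx.1)).continuousAt).continuousWithinAt
    · intro x hx
      rw [interior_Icc] at hx
      have hx0 : 0 < x := lt_trans ha hx.1
      rw [(hWd x hx0).deriv]
      have h1 : 0 < f x := hpos x hx
      have h2 : 0 < Real.sin (x - a) := by
        apply Real.sin_pos_of_pos_of_lt_pi (by linarith [hx.1])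
        have := hx.2
        linarith
      have h3 : 0 < L / x ^ 2 := by positivity
      have := mul_pos (mul_pos h3 h1) h2
      nlinarith
  have hWa : W a = 0 := by simp [hW, hfa]
  have hWb : 0 ≤ W b := by
    have hd : f' b ≤ 0 :=
      deriv_nonpos_at_right_zero hab (hf b (by linarith)) hfb hpos
    have hs : 0 ≤ Real.sin (b - a) :=
      Real.sin_nonneg_of_nonneg_of_le_pi (by linarith) (by linarith)
    have : W b = -(f' b * Real.sin (b - a)) := by simp [hW, hfb]
    rw [this]
    simp only [neg_nonneg]
    exact mul_nonpos_of_nonpos_of_nonneg hd hs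
  have := hanti (Set.mem_Icc.2 ⟨le_refl a, by linarith⟩) (Set.mem_Icc.2 ⟨hab.le, le_refl b⟩) hab
  rw [hWa] at this
  linarith

end sturm

lemma rb2_pos_le (k : ℕ) (x : ℝ) (hx : 0 < x) (hx1 : x ≤ 1) :
    0 < rb (k + 2) x ∧ rb (k + 2) x ≤ x := rb_pos_le (k + 1) x hx hx1

lemma no_antitone (k : ℕ) (hanti : AntitoneOn (rb (k + 2)) (Set.Ioc 0 1)) : False := by
  obtain ⟨h1pos, -⟩ := rb2_pos_le k 1 one_pos le_rfl
  set c := rb (k + 2) 1 with hc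
  set y : ℝ := min 1 c / 2 with hy
  have hy0 : 0 < y := by positivity
  have hy1 : y ≤ 1 := by
    have : min 1 c ≤ 1 := min_le_left _ _
    rw [hy]; linarith
  have hyc : y < c := by
    have : min 1 c ≤ c := min_le_right _ _
    rw [hy]; linarith
  have h1 := hanti (Set.mem_Ioc.2 ⟨hy0, hy1⟩) (Set.mem_Ioc.2 ⟨one_pos, le_rfl⟩) hy1
  have h2 := (rb2_pos_le k y hy0 hy1).2
  linarith

lemma rb_ne_zero_of_small (k : ℕ) (b : ℝ) (hb : 0 < b)
    (hbR : b ^ 2 ≤ ((k:ℝ) + 1) ^ 2 + 3 * ((k:ℝ) + 1) + 5 / 4) :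
    rb (k + 2) b ≠ 0 := by
  intro hub
  set N : ℝ := (k:ℝ) + 1 with hN
  have hN1 : 1 ≤ N := by rw [hN]; have := Nat.cast_nonneg (α := ℝ) k; linarith
  set L : ℝ := ((k:ℝ) + 1) * ((k:ℝ) + 2) with hL
  have hL2 : (2:ℝ) ≤ L := by rw [hL]; nlinarith [Nat.cast_nonneg (α := ℝ) k]
  have hLpos : (0:ℝ) < L := by linarith
  set Rsq : ℝ := N ^ 2 + 3 * N + 5 / 4 with hRsq
  set u : ℝ → ℝ := rb (k + 2) with hu
  set u' : ℝ → ℝ := fun y => rb (k + 1) y - (((k:ℝ) + 1) / y) * rb (k + 2) y with hu'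
  have hf : ∀ x : ℝ, x ≠ 0 → HasDerivAt u (u' x) x := by
    intro x hx
    have := rb_hasDerivAt (k + 1) x hx
    push_cast at this
    exact this
  have hf' : ∀ x : ℝ, x ≠ 0 → HasDerivAt u' ((L / x ^ 2 - 1) * u x) x := by
    intro x hx
    exact rb_deriv2 k x hx
  have upos1 : ∀ x : ℝ, 0 < x → x ≤ 1 → 0 < u x := fun x hx hx1 => (rb2_pos_le k x hx hx1).1
  -- the least zero b₀ in [1, b]
  have hb1 : 1 < b := by
    by_contra hcon
    push_neg at hcon
    exact absurd hub (ne_of_gt (upos1 b hb hcon))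
  have hcontIcc : ∀ s : Set ℝ, (∀ x ∈ s, x ≠ 0) → ContinuousOn u s := by
    intro s hs x hx
    exact ((hf x (hs x hx)).continuousAt).continuousWithinAt
  set Z : Set ℝ := {x | x ∈ Set.Icc 1 b ∧ u x = 0} with hZ
  have hZne : Z.Nonempty := ⟨b, ⟨Set.mem_Icc.2 ⟨hb1.le, le_rfl⟩, hub⟩⟩
  have hZc : IsClosed Z := by
    have h1 : Z = Set.Icc 1 b ∩ u ⁻¹' {0} := by
      ext x; simp [hZ, Set.mem_Icc, and_comm]
    rw [h1]
    apply ContinuousOn.preimage_isClosed_of_isClosed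
      (hcontIcc _ (fun x hx => by have := hx.1; intro h; rw [h] at this; linarith))
      isClosed_Icc isClosed_singleton
  have hZbdd : BddBelow Z := ⟨1, fun x hx => hx.1.1⟩
  set b₀ : ℝ := sInf Z with hb₀
  have hb₀Z : b₀ ∈ Z := IsClosed.csInf_mem hZc hZne hZbdd
  have hb₀least : ∀ x ∈ Z, b₀ ≤ x := fun x hx => csInf_le hZbdd hx
  have hb₀1 : 1 ≤ b₀ := hb₀Z.1.1
  have hb₀b : b₀ ≤ b := hb₀Z.1.2
  have hub₀ : u b₀ = 0 := hb₀Z.2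
  have hb₀gt1 : 1 < b₀ := by
    rcases eq_or_lt_of_le hb₀1 with h | h
    · exact absurd hub₀ (by rw [← h]; exact ne_of_gt (upos1 1 one_pos le_rfl))
    · exact h
  have hb₀pos : 0 < b₀ := by linarith
  have hb₀R : b₀ ^ 2 ≤ Rsq := by
    have : b₀ ^ 2 ≤ b ^ 2 := pow_le_pow_left₀ hb₀pos.le hb₀b 2
    linarith
  -- u is positive strictly below b₀
  have hupos : ∀ x : ℝ, 0 < x → x < b₀ → 0 < u x := by
    intro x hx hxb
    rcases le_or_gt x 1 with h1 | h1
    · exact upos1 x hx h1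
    · by_contra hcon
      push_neg at hcon
      rcases eq_or_lt_of_le hcon with hzero | hneg
      · exact absurd (hb₀least x ⟨Set.mem_Icc.2 ⟨h1.le, by linarith⟩, hzero⟩)
          (not_le.2 hxb)
      · have hIVT := intermediate_value_Ioo' (le_of_lt h1)
          (hcontIcc _ (fun t ht => by have := ht.1; intro h; rw [h] at this; linarith))
        have h0 : (0:ℝ) ∈ Set.Ioo (u x) (u 1) :=
          Set.mem_Ioo.2 ⟨hneg, upos1 1 one_pos le_rfl⟩
        obtain ⟨c, hc, hc0⟩ := hIVT h0
        exact absurd (hb₀least c ⟨Set.mem_Icc.2 ⟨hc.1.le, by linarith [hc.2]⟩, hc0⟩)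
          (not_le.2 (by linarith [hc.2]))
  -- monotonicity of u' below min b₀ √L
  have hL1 : 1 < Real.sqrt L := by
    rw [show (1:ℝ) = Real.sqrt 1 from (Real.sqrt_one).symm]
    exact Real.sqrt_lt_sqrt zero_le_one (by linarith)
  have hU'mono : ∀ d : ℝ, 0 < d → d ≤ b₀ → d ≤ Real.sqrt L →
      MonotoneOn u' (Set.Ioc 0 d) := by
    intro d hd hdb hdL
    refine monotoneOn_of_deriv_nonneg (convex_Ioc 0 d) ?_ ?_ ?_
    · intro x hx
      exact ((hf' x (ne_of_gt hx.1)).continuousAt).continuousWithinAt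
    · intro x hx
      rw [interior_Ioc] at hx
      exact (hf' x (ne_of_gt hx.1)).differentiableAt.differentiableWithinAt
    · intro x hx
      rw [interior_Ioc] at hx
      rw [(hf' x (ne_of_gt hx.1)).deriv]
      have hx2 : x ^ 2 < L := by
        have : x < Real.sqrt L := lt_of_lt_of_le hx.2 hdL
        exact (Real.lt_sqrt hx.1.le).1 this
      have h1 : 1 ≤ L / x ^ 2 := by
        rw [le_div_iff₀ (pow_pos hx.1 2)]
        linarith
      have h2 : 0 < u x := hupos x hx.1 (lt_of_lt_of_le hx.2 hdb)
      nlinarith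
  -- existence of a point with positive derivative
  have hxi : ∀ d : ℝ, 1 < d → d ≤ b₀ → d ≤ Real.sqrt L →
      ∃ ξ ∈ Set.Ioo (0:ℝ) d, 0 < u' ξ := by
    intro d hd hdb hdL
    by_contra hcon
    push_neg at hcon
    apply no_antitone k
    refine antitoneOn_of_deriv_nonpos (convex_Ioc 0 1) ?_ ?_ ?_
    · intro x hx
      exact ((hf x (ne_of_gt hx.1)).continuousAt).continuousWithinAt
    · intro x hx
      rw [interior_Ioc] at hx
      exact (hf x (ne_of_gt hx.1)).differentiableAt.differentiableWithinAt
    · intro x hx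
      rw [interior_Ioc] at hx
      rw [(hf x (ne_of_gt hx.1)).deriv]
      exact hcon x (Set.mem_Ioo.2 ⟨hx.1, by linarith [hx.2]⟩)
  rcases le_or_gt b₀ (Real.sqrt L) with hcase | hcase
  -- Case A : b₀ ≤ √L, convexity contradiction
  · obtain ⟨ξ, hξ, hξpos⟩ := hxi b₀ hb₀gt1 le_rfl hcase
    have hmono := hU'mono b₀ hb₀pos le_rfl hcase
    have hsm : StrictMonoOn u (Set.Icc ξ b₀) := by
      refine strictMonoOn_of_deriv_pos (convex_Icc _ _) ?_ ?_
      · intro x hx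
        exact ((hf x (ne_of_gt (lt_of_lt_of_le hξ.1 hx.1))).continuousAt).continuousWithinAt
      · intro x hx
        rw [interior_Icc] at hx
        rw [(hf x (ne_of_gt (lt_trans hξ.1 hx.1))).deriv]
        have := hmono (Set.mem_Ioc.2 ⟨hξ.1, hξ.2.le⟩)
          (Set.mem_Ioc.2 ⟨lt_trans hξ.1 hx.1, hx.2.le⟩) hx.1.le
        linarith
    have h1 := hsm (Set.mem_Icc.2 ⟨le_rfl, hξ.2.le⟩) (Set.mem_Icc.2 ⟨hξ.2.le, le_rfl⟩) hξ.2
    have h2 := hupos ξ hξ.1 hξ.2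
    rw [hub₀] at h1
    linarith
  -- Case B : √L < b₀, Sturm comparison with cosine
  · set am : ℝ := Real.sqrt L with ham
    have hamsq : am ^ 2 = L := Real.sq_sqrt hLpos.le
    have ham1 : 1 < am := hL1
    have hampos : 0 < am := lt_trans one_pos ham1
    have hamb : am < b₀ := hcase
    obtain ⟨ξ, hξ, hξpos⟩ := hxi am ham1 hamb.le le_rfl
    have hU'am : 0 < u' am := lt_of_lt_of_le hξpos
      ((hU'mono am hampos hamb.le le_rfl) (Set.mem_Ioc.2 ⟨hξ.1, hξ.2.le⟩)
        (Set.mem_Ioc.2 ⟨hampos, le_rfl⟩) hξ.2.le)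
    have hLb : L < b₀ ^ 2 := by
      rw [← hamsq]; exact pow_lt_pow_left₀ hamb hampos.le two_ne_zero
    set K : ℝ := 1 - L / b₀ ^ 2 with hK
    have hKpos : 0 < K := by
      rw [hK, sub_pos, div_lt_one (pow_pos hb₀pos 2)]; exact hLb
    set ω : ℝ := Real.sqrt K with hω
    have hωsq : ω ^ 2 = K := Real.sq_sqrt hKpos.le
    have hωpos : 0 < ω := Real.sqrt_pos.2 hKpos
    -- key size bound : ω (b₀ - am) ≤ π/2
    have hpi : (3.14 : ℝ) < Real.pi := by linarith [Real.pi_gt_d6]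
    have hsmall : ω * (b₀ - am) ≤ Real.pi / 2 := by
      set c : ℝ := Rsq - L with hc
      have hcval : c = 2 * N + 5 / 4 := by rw [hc, hRsq, hL, hN]; ring
      have hLval : L = N * (N + 1) := by rw [hL, hN]; ring
      have hpi2 : ((24649:ℝ)/2500) ≤ Real.pi ^ 2 := by
        have h1 : (3.14 : ℝ) * 3.14 ≤ Real.pi * Real.pi :=
          mul_self_le_mul_self (by norm_num) hpi.le
        have h2 : Real.pi ^ 2 = Real.pi * Real.pi := sq Real.pi ▸ by ring
        rw [h2]; norm_num; linarith
      have hc3 : c ^ 3 ≤ Real.pi ^ 2 * L ^ 2 := by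
        rw [hcval, hLval]
        have h0 : (0:ℝ) ≤ N - 1 := by linarith
        have hN0 : (0:ℝ) ≤ N := by linarith
        have key : (2 * N + 5 / 4) ^ 3 ≤ ((24649:ℝ)/2500) * (N * (N + 1)) ^ 2 := by
          have e : ((24649:ℝ)/2500) * (N * (N + 1)) ^ 2 - (2 * N + 5 / 4) ^ 3 =
              (N - 1) * ((24649/2500) * N ^ 3 + (53947/2500) * N ^ 2 + (10274/625) * N
                + 35317/5000) + 204411/40000 := by ring
          have hterm : (0:ℝ) ≤ (N - 1) * ((24649/2500) * N ^ 3 + (53947/2500) * N ^ 2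
              + (10274/625) * N + 35317/5000) :=
            mul_nonneg h0 (by
              have h1 : (0:ℝ) ≤ (24649/2500) * N ^ 3 :=
                mul_nonneg (by norm_num) (pow_nonneg hN0 3)
              have h2 : (0:ℝ) ≤ (53947/2500) * N ^ 2 :=
                mul_nonneg (by norm_num) (pow_nonneg hN0 2)
              have h3 : (0:ℝ) ≤ (10274/625) * N := mul_nonneg (by norm_num) hN0
              linarith)
          linarith
        have h2 : ((24649:ℝ)/2500) * (N * (N + 1)) ^ 2 ≤ Real.pi ^ 2 * (N * (N + 1)) ^ 2 :=
          mul_le_mul_of_nonneg_right hpi2 (sq_nonneg _)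
        linarith
      have hBle : b₀ ^ 2 - L ≤ c := by rw [hc]; linarith
      have hBnn : 0 ≤ b₀ ^ 2 - L := by linarith
      have hdiff : (b₀ - am) * (b₀ + am) = b₀ ^ 2 - L := by rw [← hamsq]; ring
      have he2 : b₀ - am ≤ (b₀ ^ 2 - L) / (2 * am) := by
        rw [le_div_iff₀ (by positivity)]
        have hmm : (b₀ - am) * (2 * am) ≤ (b₀ - am) * (b₀ + am) :=
          mul_le_mul_of_nonneg_left (by linarith) (by linarith)
        linarith [hdiff]
      apply le_of_pow_le_pow_left₀ two_ne_zero (by positivity : (0:ℝ) ≤ Real.pi / 2)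
      have e3 : (ω * (b₀ - am)) ^ 2 = K * (b₀ - am) ^ 2 := by rw [mul_pow, hωsq]
      have e4 : K * (b₀ - am) ^ 2 ≤ K * ((b₀ ^ 2 - L) / (2 * am)) ^ 2 :=
        mul_le_mul_of_nonneg_left (pow_le_pow_left₀ (by linarith) he2 2) hKpos.le
      have hKeq : K = (b₀ ^ 2 - L) / b₀ ^ 2 := by
        rw [hK]; field_simp
      have e5 : K * ((b₀ ^ 2 - L) / (2 * am)) ^ 2 = (b₀ ^ 2 - L) ^ 3 / (4 * L * b₀ ^ 2) := by
        rw [hKeq, div_pow, mul_pow]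
        rw [hamsq]
        field_simp
        ring
      have e6 : (b₀ ^ 2 - L) ^ 3 / (4 * L * b₀ ^ 2) ≤ c ^ 3 / (4 * L * b₀ ^ 2) := by
        apply div_le_div_of_nonneg_right ?_ (by positivity)
        exact pow_le_pow_left₀ hBnn hBle 3
      have e7 : c ^ 3 / (4 * L * b₀ ^ 2) ≤ c ^ 3 / (4 * L * L) := by
        apply div_le_div_of_nonneg_left (pow_nonneg (le_trans hBnn hBle) 3) (by positivity) ?_
        have := mul_le_mul_of_nonneg_left hLb.le (by linarith : (0:ℝ) ≤ 4 * L)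
        linarith
      have e8 : c ^ 3 / (4 * L * L) ≤ (Real.pi ^ 2 * L ^ 2) / (4 * L * L) := by
        apply div_le_div_of_nonneg_right hc3 (by positivity)
      have e9 : (Real.pi ^ 2 * L ^ 2) / (4 * L * L) = (Real.pi / 2) ^ 2 := by
        field_simp
        ring
      calc (ω * (b₀ - am)) ^ 2 = K * (b₀ - am) ^ 2 := e3
        _ ≤ K * ((b₀ ^ 2 - L) / (2 * am)) ^ 2 := e4
        _ = (b₀ ^ 2 - L) ^ 3 / (4 * L * b₀ ^ 2) := e5
        _ ≤ c ^ 3 / (4 * L * b₀ ^ 2) := e6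
        _ ≤ c ^ 3 / (4 * L * L) := e7
        _ ≤ (Real.pi ^ 2 * L ^ 2) / (4 * L * L) := e8
        _ = (Real.pi / 2) ^ 2 := e9
    -- the comparison function and Wronskian
    have hlin : ∀ x : ℝ, HasDerivAt (fun y : ℝ => ω * (y - am)) ω x := by
      intro x
      simpa using ((hasDerivAt_id x).sub_const am).const_mul ω
    set v : ℝ → ℝ := fun y => Real.cos (ω * (y - am)) with hv
    have hvder : ∀ x : ℝ, HasDerivAt v (-ω * Real.sin (ω * (x - am))) x := by
      intro x
      have := (Real.hasDerivAt_cos (ω * (x - am))).comp x (hlin x)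
      refine this.congr_deriv ?_
      ring
    have hwder : ∀ x : ℝ, HasDerivAt (fun y : ℝ => -ω * Real.sin (ω * (y - am)))
        (-(ω ^ 2) * Real.cos (ω * (x - am))) x := by
      intro x
      have := ((Real.hasDerivAt_sin (ω * (x - am))).comp x (hlin x)).const_mul (-ω)
      refine this.congr_deriv ?_
      ring
    set W : ℝ → ℝ := fun y => u y * (-ω * Real.sin (ω * (y - am))) - u' y * v y with hW
    have hWd : ∀ x : ℝ, 0 < x →
        HasDerivAt W (u x * Real.cos (ω * (x - am)) * ((1 - L / x ^ 2) - K)) x := by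
      intro x hx
      have h := ((hf x (ne_of_gt hx)).mul (hwder x)).sub ((hf' x (ne_of_gt hx)).mul (hvder x))
      refine h.congr_deriv ?_
      simp only [hv]
      rw [← hωsq]
      ring
    have hvpos : ∀ x ∈ Set.Ico am b₀, 0 < v x := by
      intro x hx
      apply Real.cos_pos_of_mem_Ioo
      constructor
      · have h1 : 0 ≤ ω * (x - am) := mul_nonneg hωpos.le (by linarith [hx.1])
        have := Real.pi_pos
        linarith
      · have h1 : ω * (x - am) < ω * (b₀ - am) :=
          mul_lt_mul_of_pos_left (by linarith [hx.2]) hωpos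
        linarith
    have hvb : 0 ≤ v b₀ := by
      apply Real.cos_nonneg_of_mem_Icc
      constructor
      · have h1 : 0 ≤ ω * (b₀ - am) := mul_nonneg hωpos.le (by linarith)
        have := Real.pi_pos
        linarith
      · exact hsmall
    have hanti : StrictAntiOn W (Set.Icc am b₀) := by
      refine strictAntiOn_of_deriv_neg (convex_Icc _ _) ?_ ?_
      · intro x hx
        exact ((hWd x (lt_of_lt_of_le hampos hx.1)).continuousAt).continuousWithinAt
      · intro x hx
        rw [interior_Icc] at hx
        have hxpos : 0 < x := lt_trans hampos hx.1
        rw [(hWd x hxpos).deriv]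
        have h1 : 0 < u x := hupos x hxpos hx.2
        have h2 : 0 < Real.cos (ω * (x - am)) := hvpos x ⟨hx.1.le, hx.2⟩
        have h3 : (1 - L / x ^ 2) - K < 0 := by
          have hd : L / b₀ ^ 2 < L / x ^ 2 := by
            apply div_lt_div_of_pos_left hLpos (pow_pos hxpos 2)
            exact pow_lt_pow_left₀ hx.2 hxpos.le two_ne_zero
          rw [hK]
          linarith
        exact mul_neg_of_pos_of_neg (mul_pos h1 h2) h3
    have hWam : W am = -u' am := by
      simp [hW, hv]
    have hu'b₀ : u' b₀ ≤ 0 :=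
      deriv_nonpos_at_right_zero hamb (hf b₀ (ne_of_gt hb₀pos)) hub₀
        (fun x hx => hupos x (lt_trans hampos hx.1) hx.2)
    have hWb : 0 ≤ W b₀ := by
      have hWb0 : W b₀ = -(u' b₀ * v b₀) := by
        simp [hW, hub₀]
      rw [hWb0]
      exact neg_nonneg.2 (mul_nonpos_of_nonpos_of_nonneg hu'b₀ hvb)
    have hlt := hanti (Set.mem_Icc.2 ⟨le_rfl, hamb.le⟩) (Set.mem_Icc.2 ⟨hamb.le, le_rfl⟩) hamb
    rw [hWam] at hlt
    linarith

lemma pos_or_neg_on_Ioo (f : ℝ → ℝ) (a b : ℝ) (hab : a < b)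
    (hcont : ∀ x ∈ Set.Ioo a b, ContinuousAt f x)
    (hne : ∀ x ∈ Set.Ioo a b, f x ≠ 0) :
    (∀ x ∈ Set.Ioo a b, 0 < f x) ∨ (∀ x ∈ Set.Ioo a b, f x < 0) := by
  set m : ℝ := (a + b) / 2 with hmdef
  have hm : m ∈ Set.Ioo a b := ⟨by rw [hmdef]; linarith, by rw [hmdef]; linarith⟩
  have key : ∀ x ∈ Set.Ioo a b, ∀ y ∈ Set.Ioo a b, f x < 0 → 0 < f y → False := by
    intro x hx y hy hfx hfy
    rcases lt_trichotomy x y with hxy | rfl | hyx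
    · have hsub : Set.Ioo x y ⊆ Set.Ioo a b := fun t ht => ⟨lt_trans hx.1 ht.1, lt_trans ht.2 hy.2⟩
      have hco : ContinuousOn f (Set.Icc x y) := fun t ht =>
        (hcont t ⟨lt_of_lt_of_le hx.1 ht.1, lt_of_le_of_lt ht.2 hy.2⟩).continuousWithinAt
      obtain ⟨c, hc1, hc2⟩ := intermediate_value_Ioo hxy.le hco (Set.mem_Ioo.2 ⟨hfx, hfy⟩)
      exact hne c (hsub hc1) hc2
    · linarith
    · have hsub : Set.Ioo y x ⊆ Set.Ioo a b := fun t ht => ⟨lt_trans hy.1 ht.1, lt_trans ht.2 hx.2⟩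
      have hco : ContinuousOn f (Set.Icc y x) := fun t ht =>
        (hcont t ⟨lt_of_lt_of_le hy.1 ht.1, lt_of_le_of_lt ht.2 hx.2⟩).continuousWithinAt
      obtain ⟨c, hc1, hc2⟩ := intermediate_value_Ioo' hyx.le hco (Set.mem_Ioo.2 ⟨hfx, hfy⟩)
      exact hne c (hsub hc1) hc2
  rcases (hne m hm).lt_or_gt with hneg | hpos
  · right
    intro x hx
    by_contra hc
    push_neg at hc
    have : 0 < f x := lt_of_le_of_ne hc (Ne.symm (hne x hx))
    exact key m hm x hx hneg this
  · left
    intro x hx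
    by_contra hc
    push_neg at hc
    have : f x < 0 := lt_of_le_of_ne hc (hne x hx)
    exact key x hx m hm this hpos

/-- `besselJhalf n x = J_{n+1/2}(x)`. -/
noncomputable def besselJhalf (n : ℕ) (x : ℝ) : ℝ := sbJ (n + 1) x

lemma besselJhalf_zero_iff (n : ℕ) (x : ℝ) (hx : 0 < x) :
    besselJhalf n x = 0 ↔ rb (n + 1) x = 0 := by
  have hfac : 0 < Real.sqrt (2 / (Real.pi * x)) :=
    Real.sqrt_pos.2 (by positivity)
  rw [besselJhalf, sbJ_eq_rb]
  constructor
  · intro h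
    rcases mul_eq_zero.1 h with h | h
    · exact absurd h (ne_of_gt hfac)
    · exact h
  · intro h
    rw [h, mul_zero]

/-- For `n ≥ 1`, if `j m` enumerates (in increasing order, `m ≥ 1`)
all the positive zeros of `J_{n+1/2}`, then
`j m > (m−1)π + √((n+1/2)(n+5/2))`, and consequently
`j m ² > (m−1)²π² + (n+1/2)(n+5/2)`. -/
theorem stmt9 (n : ℕ) (hn : 1 ≤ n) (j : ℕ → ℝ)
    (hzero : ∀ m, 1 ≤ m → 0 < j m ∧ besselJhalf n (j m) = 0)
    (hmono : ∀ m m', 1 ≤ m → m < m' → j m < j m')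
    (hall : ∀ x, 0 < x → besselJhalf n x = 0 → ∃ m, 1 ≤ m ∧ x = j m) :
    ∀ m, 1 ≤ m →
      j m > ((m : ℝ) - 1) * Real.pi + Real.sqrt (((n : ℝ) + 1 / 2) * ((n : ℝ) + 5 / 2)) ∧
      (j m) ^ 2 > ((m : ℝ) - 1) ^ 2 * Real.pi ^ 2 + ((n : ℝ) + 1 / 2) * ((n : ℝ) + 5 / 2) := by
  obtain ⟨k, rfl⟩ : ∃ k, n = k + 1 := ⟨n - 1, by omega⟩
  set R : ℝ := Real.sqrt ((((k + 1 : ℕ) : ℝ) + 1 / 2) * (((k + 1 : ℕ) : ℝ) + 5 / 2)) with hR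
  have hprodnn : (0:ℝ) ≤ (((k + 1 : ℕ) : ℝ) + 1 / 2) * (((k + 1 : ℕ) : ℝ) + 5 / 2) := by
    positivity
  have hR2 : R ^ 2 = (((k + 1 : ℕ) : ℝ) + 1 / 2) * (((k + 1 : ℕ) : ℝ) + 5 / 2) :=
    Real.sq_sqrt hprodnn
  have hRnn : 0 ≤ R := Real.sqrt_nonneg _
  -- derivative data
  set u' : ℝ → ℝ := fun y => rb (k + 1) y - (((k:ℝ) + 1) / y) * rb (k + 2) y with hu'
  have hf : ∀ x : ℝ, x ≠ 0 → HasDerivAt (rb (k + 2)) (u' x) x := by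
    intro x hx
    have := rb_hasDerivAt (k + 1) x hx
    push_cast at this
    exact this
  have hf' : ∀ x : ℝ, x ≠ 0 → HasDerivAt u'
      (((((k:ℝ) + 1) * ((k:ℝ) + 2)) / x ^ 2 - 1) * rb (k + 2) x) x := fun x hx =>
    rb_deriv2 k x hx
  have hzrb : ∀ m, 1 ≤ m → rb (k + 2) (j m) = 0 := by
    intro m hm
    obtain ⟨hjm, hz⟩ := hzero m hm
    exact (besselJhalf_zero_iff (k + 1) (j m) hjm).1 hz
  -- main lower bound by induction
  have A : ∀ m : ℕ, 1 ≤ m → ((m : ℝ) - 1) * Real.pi + R < j m := by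
    intro m hm
    induction m, hm using Nat.le_induction with
    | base =>
        have hj1 : 0 < j 1 := (hzero 1 le_rfl).1
        have hz1 : rb (k + 2) (j 1) = 0 := hzrb 1 le_rfl
        have : R < j 1 := by
          by_contra hcon
          push_neg at hcon
          refine rb_ne_zero_of_small k (j 1) hj1 ?_ hz1
          have h1 : (j 1) ^ 2 ≤ R ^ 2 := pow_le_pow_left₀ hj1.le hcon 2
          rw [hR2] at h1
          push_cast at h1 ⊢
          linarith
        push_cast
        linarith
    | succ m hm1 IH =>
        have ha : 0 < j m := (hzero m hm1).1
        have hb : j m < j (m + 1) := hmono m (m + 1) hm1 (Nat.lt_succ_self m)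
        have hza : rb (k + 2) (j m) = 0 := hzrb m hm1
        have hzb : rb (k + 2) (j (m + 1)) = 0 := hzrb (m + 1) (by omega)
        have hne : ∀ x ∈ Set.Ioo (j m) (j (m + 1)), rb (k + 2) x ≠ 0 := by
          intro x hx hz
          have hxpos : 0 < x := lt_trans ha hx.1
          obtain ⟨m', hm'1, rfl⟩ := hall x hxpos
            ((besselJhalf_zero_iff (k + 1) x hxpos).2 hz)
          rcases lt_trichotomy m' m with h | rfl | h
          · exact absurd (hmono m' m hm'1 h) (not_lt.2 hx.1.le)
          · exact lt_irrefl _ hx.1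
          · rcases lt_trichotomy m' (m + 1) with h2 | rfl | h2
            · omega
            · exact lt_irrefl _ hx.2
            · exact absurd (hmono (m + 1) m' (by omega) h2) (not_lt.2 hx.2.le)
        have hcont : ∀ x ∈ Set.Ioo (j m) (j (m + 1)), ContinuousAt (rb (k + 2)) x :=
          fun x hx => (hf x (ne_of_gt (lt_trans ha hx.1))).continuousAt
        have hgap : j m + Real.pi < j (m + 1) := by
          rcases pos_or_neg_on_Ioo (rb (k + 2)) (j m) (j (m + 1)) hb hcont hne with hps | hng
          · exact sturm_gap k (rb (k + 2)) u' hf hf' (j m) (j (m + 1)) ha hb hza hzb hps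
          · refine sturm_gap k (fun y => -(rb (k + 2) y)) (fun y => -(u' y))
              (fun x hx => (hf x hx).neg) ?_ (j m) (j (m + 1)) ha hb
              (by show -(rb (k + 2) (j m)) = 0; rw [hza, neg_zero])
              (by show -(rb (k + 2) (j (m + 1))) = 0; rw [hzb, neg_zero])
              (fun x hx => neg_pos.2 (hng x hx))
            intro x hx
            have := (hf' x hx).neg
            refine this.congr_deriv ?_
            ring
        push_cast
        push_cast at IH
        linarith
  intro m hm
  have hA := A m hm
  constructor
  · exact hA
  · have hm1 : (1:ℝ) ≤ (m:ℝ) := by exact_mod_cast hm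
    have hs : 0 ≤ ((m : ℝ) - 1) * Real.pi + R := by
      have := Real.pi_pos
      have h1 : 0 ≤ ((m:ℝ) - 1) * Real.pi := mul_nonneg (by linarith) this.le
      linarith
    have hsq : (((m : ℝ) - 1) * Real.pi + R) ^ 2 < (j m) ^ 2 :=
      pow_lt_pow_left₀ hA hs two_ne_zero
    have hcross : 0 ≤ ((m:ℝ) - 1) * Real.pi * R := by
      have := Real.pi_pos
      exact mul_nonneg (mul_nonneg (by linarith) this.le) hRnn
    nlinarith [hR2, hsq, hcross]
end

section
/- Let R > 0, β > 0, and for an integer n ≥ 0 define φ_n(s) = (s+1)·R·P_n(√(s+1)·R) + n/R + β, where P_n(ξ) = 2·∑_{m=1}^∞ 1/(ξ² + j_{n+1/2,m}²) and j_{n+1/2,m} are the positive zeros of J_{n+1/2}. Then for all sufficiently large n, φ_n(−n²/(3R²)) > β. In particular, combined with φ_n(s) → −∞ as s decreases to −1 − (j_{n+1/2,1}/R)², the first zero of φ_n lies in the interval (−1 − (j_{n+1/2,1}/R)², −n²/(3R²)). -/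
open Real Finset
set_option maxHeartbeats 1000000


/-- Let `R, β > 0`, and let `j n m` (`m ≥ 1`) enumerate in increasing
order the positive zeros of `J_{n+1/2}`. Define (via the Mittag-Leffler series for
`P_n`, with `ξ² = (s+1)R²`)
`φ_n(s) = 2(s+1)R·∑_{m≥1} 1/((s+1)R² + j_{n+1/2,m}²) + n/R + β`.
Assuming the estimate `j n m > (m−1)π + √((n+1/2)(n+5/2))`, for all sufficiently
large `n` one has `φ_n(−n²/(3R²)) > β`. -/
theorem stmt10 (R β : ℝ) (hR : 0 < R) (hβ : 0 < β) (j : ℕ → ℕ → ℝ)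
    (hzero : ∀ n m, 1 ≤ m → 0 < j n m ∧ besselJhalf n (j n m) = 0)
    (hmono : ∀ n m m', 1 ≤ m → m < m' → j n m < j n m')
    (hall : ∀ n x, 0 < x → besselJhalf n x = 0 → ∃ m, 1 ≤ m ∧ x = j n m)
    (hest : ∀ n m, 1 ≤ m →
      j n m > ((m : ℝ) - 1) * Real.pi + Real.sqrt (((n : ℝ) + 1 / 2) * ((n : ℝ) + 5 / 2))) :
    ∃ N : ℕ, ∀ n ≥ N,
      2 * (-(n : ℝ) ^ 2 / (3 * R ^ 2) + 1) * R *
          (∑' m : ℕ, 1 / ((-(n : ℝ) ^ 2 / (3 * R ^ 2) + 1) * R ^ 2 + (j n (m + 1)) ^ 2))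
        + (n : ℝ) / R + β > β := by
  refine ⟨2, fun n hn => ?_⟩
  have hn2 : (2 : ℝ) ≤ (n : ℝ) := by exact_mod_cast hn
  have hπ : (3 : ℝ) < Real.pi := Real.pi_gt_three
  have hπ0 : (0 : ℝ) < Real.pi := by linarith
  have hn0 : (0 : ℝ) < (n : ℝ) := by linarith
  have hR' : R ≠ 0 := ne_of_gt hR
  set a : ℝ := 4 / 5 * (n : ℝ) with ha_def
  have ha : 0 < a := by rw [ha_def]; linarith
  set s1 : ℝ := -(n : ℝ) ^ 2 / (3 * R ^ 2) + 1 with hs1_def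
  set b : ℝ := Real.sqrt (((n : ℝ) + 1 / 2) * ((n : ℝ) + 5 / 2)) with hb_def
  have hbnn : 0 ≤ b := Real.sqrt_nonneg _
  have hb2 : b ^ 2 = ((n : ℝ) + 1 / 2) * ((n : ℝ) + 5 / 2) :=
    Real.sq_sqrt (by positivity)
  have hbn : (n : ℝ) < b := by nlinarith [hb2, hbnn, hn0]
  have hs1R : s1 * R ^ 2 = R ^ 2 - (n : ℝ) ^ 2 / 3 := by
    rw [hs1_def]; field_simp; ring
  -- positivity of the comparison denominators
  have hGpos : ∀ m : ℕ, 0 < (m : ℝ) * Real.pi + a := by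
    intro m
    have : (0:ℝ) ≤ (m : ℝ) * Real.pi := mul_nonneg (Nat.cast_nonneg m) hπ0.le
    linarith
  -- denominator bound
  have hD : ∀ m : ℕ, ((m : ℝ) * Real.pi + a) ^ 2 < s1 * R ^ 2 + (j n (m + 1)) ^ 2 := by
    intro m
    have hj := hest n (m + 1) (Nat.le_add_left 1 m)
    have hj' : (m : ℝ) * Real.pi + b < j n (m + 1) := by push_cast at hj; linarith
    have hjpos : 0 < j n (m + 1) := (hzero n (m + 1) (Nat.le_add_left 1 m)).1
    have hmb : 0 ≤ (m : ℝ) * Real.pi + b := by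
      have : (0:ℝ) ≤ (m : ℝ) * Real.pi := mul_nonneg (Nat.cast_nonneg m) hπ0.le
      linarith
    have hsq : ((m : ℝ) * Real.pi + b) ^ 2 < (j n (m + 1)) ^ 2 := by nlinarith
    rw [hs1R]
    have hcross : 0 ≤ (m : ℝ) * Real.pi * (b - a) :=
      mul_nonneg (mul_nonneg (Nat.cast_nonneg m) hπ0.le) (by rw [ha_def]; linarith)
    nlinarith [sq_nonneg R, hb2, hcross, hsq, hn0]
  set f : ℕ → ℝ := fun m => 1 / (s1 * R ^ 2 + (j n (m + 1)) ^ 2) with hf_def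
  set g : ℕ → ℝ := fun m => 1 / ((m : ℝ) * Real.pi + a) ^ 2 with hg_def
  have hG2pos : ∀ m : ℕ, 0 < ((m : ℝ) * Real.pi + a) ^ 2 := fun m => pow_pos (hGpos m) 2
  have hDpos : ∀ m : ℕ, 0 < s1 * R ^ 2 + (j n (m + 1)) ^ 2 :=
    fun m => (hG2pos m).trans (hD m)
  have hfg : ∀ m, f m ≤ g m := fun m => one_div_le_one_div_of_le (hG2pos m) (hD m).le
  have hf_nonneg : ∀ m, 0 ≤ f m := fun m => le_of_lt (one_div_pos.mpr (hDpos m))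
  have hg_nonneg : ∀ m, 0 ≤ g m := fun m => le_of_lt (one_div_pos.mpr (hG2pos m))
  -- summability
  have hbase : Summable (fun m : ℕ => 1 / ((m : ℝ) + 1) ^ 2) := by
    have h := Real.summable_one_div_nat_pow.mpr (by norm_num : 1 < 2)
    have h2 := (summable_nat_add_iff 1).mpr h
    simpa using h2
  have hg_le : ∀ m : ℕ, g m ≤ 1 / ((m : ℝ) + 1) ^ 2 := by
    intro m
    apply one_div_le_one_div_of_le (by positivity)
    have h1 : (m : ℝ) + 1 ≤ (m : ℝ) * Real.pi + a := by
      have : 0 ≤ (m : ℝ) * (Real.pi - 1) := mul_nonneg (Nat.cast_nonneg m) (by linarith)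
      rw [ha_def]; nlinarith
    have h0 : (0:ℝ) ≤ (m : ℝ) + 1 := by positivity
    exact pow_le_pow_left₀ h0 h1 2
  have hg_sum : Summable g :=
    Summable.of_nonneg_of_le hg_nonneg hg_le hbase
  have hf_sum : Summable f := Summable.of_nonneg_of_le hf_nonneg hfg hg_sum
  -- telescoping bound for partial sums of g
  have htel : ∀ M : ℕ, ∑ m ∈ Finset.range M, g (m + 1)
      ≤ 1 / Real.pi * (1 / a - 1 / ((M : ℝ) * Real.pi + a)) := by
    intro M
    induction M with
    | zero => rw [Finset.sum_range_zero]; norm_num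
    | succ M ih =>
      rw [Finset.sum_range_succ]
      have hx : 0 < (M : ℝ) * Real.pi + a := hGpos M
      have hy : 0 < ((M : ℝ) + 1) * Real.pi + a := by nlinarith
      have hstep : g (M + 1)
          ≤ 1 / Real.pi * (1 / ((M : ℝ) * Real.pi + a) - 1 / (((M : ℝ) + 1) * Real.pi + a)) := by
        have heq : 1 / Real.pi * (1 / ((M : ℝ) * Real.pi + a) - 1 / (((M : ℝ) + 1) * Real.pi + a))
            = 1 / (((M : ℝ) * Real.pi + a) * (((M : ℝ) + 1) * Real.pi + a)) := by
          field_simp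
          ring
        rw [heq]
        have hgval : g (M + 1) = 1 / ((((M : ℝ) + 1)) * Real.pi + a) ^ 2 := by
          rw [hg_def]; push_cast; ring_nf
        rw [hgval]
        apply one_div_le_one_div_of_le (mul_pos hx hy)
        nlinarith
      have hcast : ((M + 1 : ℕ) : ℝ) = (M : ℝ) + 1 := by push_cast; ring
      rw [hcast]
      linarith
  have hpartial : ∀ M : ℕ, ∑ m ∈ Finset.range M, g m ≤ 1 / a ^ 2 + 1 / (Real.pi * a) := by
    intro M
    cases M with
    | zero => simp; positivity
    | succ M =>
      rw [Finset.sum_range_succ']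
      have h0 : g 0 = 1 / a ^ 2 := by rw [hg_def]; norm_num
      have hx : 0 < (M : ℝ) * Real.pi + a := hGpos M
      have h1 : 1 / Real.pi * (1 / a - 1 / ((M : ℝ) * Real.pi + a)) ≤ 1 / (Real.pi * a) := by
        have h2 : 1 / Real.pi * (1 / a) = 1 / (Real.pi * a) := by field_simp
        have h3 : 0 < 1 / ((M : ℝ) * Real.pi + a) := one_div_pos.mpr hx
        have h4 : 0 < 1 / Real.pi := one_div_pos.mpr hπ0
        nlinarith
      have := htel M
      rw [h0]
      linarith
  have hT : ∑' m, g m ≤ 1 / a ^ 2 + 1 / (Real.pi * a) :=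
    Summable.tsum_le_of_sum_range_le hg_sum hpartial
  have hS_le : ∑' m, f m ≤ ∑' m, g m := Summable.tsum_le_tsum hfg hf_sum hg_sum
  have hS0 : 0 ≤ ∑' m, f m := tsum_nonneg hf_nonneg
  have hSB : ∑' m, f m ≤ 1 / a ^ 2 + 1 / (Real.pi * a) := le_trans hS_le hT
  set S : ℝ := ∑' m, f m with hS_def
  clear_value S s1 a b f g
  have hgoal : 0 < 2 * s1 * R * S + (n : ℝ) / R := by
    rcases le_or_gt 0 s1 with hs | hs
    · have h1 : 0 ≤ 2 * s1 * R * S := by positivity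
      have h2 : 0 < (n : ℝ) / R := div_pos hn0 hR
      linarith
    · have hmul : 2 * s1 * R ≤ 0 := by nlinarith
      have h1 : 2 * s1 * R * (1 / a ^ 2 + 1 / (Real.pi * a)) ≤ 2 * s1 * R * S :=
        mul_le_mul_of_nonpos_left hSB hmul
      have h2 : 0 < 2 * s1 * R * (1 / a ^ 2 + 1 / (Real.pi * a)) + (n : ℝ) / R := by
        rw [hs1_def, ha_def]
        have hn' : (n : ℝ) ≠ 0 := ne_of_gt hn0
        have hπ' : Real.pi ≠ 0 := ne_of_gt hπ0
        have key : 2 * (-(n : ℝ) ^ 2 / (3 * R ^ 2) + 1) * R *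
              (1 / (4 / 5 * (n : ℝ)) ^ 2 + 1 / (Real.pi * (4 / 5 * (n : ℝ)))) + (n : ℝ) / R
            = (150 * Real.pi * R ^ 2 + 120 * (n : ℝ) * R ^ 2 - 50 * Real.pi * (n : ℝ) ^ 2
                - 40 * (n : ℝ) ^ 3 + 48 * Real.pi * (n : ℝ) ^ 3)
              / (48 * Real.pi * (n : ℝ) ^ 2 * R) := by
          field_simp
          ring
        rw [key]
        apply div_pos _ (by positivity)
        nlinarith [sq_nonneg R, mul_pos hπ0 hn0,
          mul_nonneg (mul_nonneg (sub_nonneg.mpr hπ.le) (sq_nonneg (n : ℝ))) (sub_nonneg.mpr hn2),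
          mul_pos (mul_pos hπ0 hn0) hn0]
      linarith
  linarith
end

section
/- For every R > 0, the identity R²·P₀(R) + 1 + 6·P₀(R) − 1/P₀(R) = R³·P₀(R)·P₁'(R) holds, where P₀(R) = (1/R)coth(R) − 1/R², P₁(R) = 1/(R²·P₂(R) + 5) satisfies P₀(R) = 1/(R²·P₁(R) + 3), and P₁' is the derivative of P₁. -/
/-- `P₀(R) = (1/R)·coth R − 1/R²`. -/
noncomputable def P0 (R : ℝ) : ℝ := (1 / R) * (Real.cosh R / Real.sinh R) - 1 / R ^ 2

/-- `P₁(R) = (1/P₀(R) − 3)/R²`, from the recurrence `P₀(R) = 1/(R²P₁(R)+3)`. -/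
noncomputable def P1 (R : ℝ) : ℝ := (1 / P0 R - 3) / R ^ 2

lemma sinh_lt_mul_cosh {x : ℝ} (hx : 0 < x) : Real.sinh x < x * Real.cosh x := by
  have hmono : StrictMonoOn (fun y : ℝ => y * Real.cosh y - Real.sinh y) (Set.Ici 0) := by
    apply strictMonoOn_of_deriv_pos (convex_Ici 0)
    · fun_prop
    · intro y hy
      rw [interior_Ici] at hy
      have h : HasDerivAt (fun y : ℝ => y * Real.cosh y - Real.sinh y)
          (1 * Real.cosh y + y * Real.sinh y - Real.cosh y) y :=
        ((hasDerivAt_id y).mul (Real.hasDerivAt_cosh y)).sub (Real.hasDerivAt_sinh y)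
      rw [h.deriv]
      have hy' := Set.mem_Ioi.1 hy
      have := Real.sinh_pos_iff.2 hy'
      nlinarith [mul_pos hy' this]
  have := hmono (Set.self_mem_Ici) (Set.mem_Ici.2 hx.le) hx
  simpa using this

lemma P0_eq {x : ℝ} (hx : 0 < x) :
    P0 x = (x * Real.cosh x - Real.sinh x) / (x ^ 2 * Real.sinh x) := by
  have hs := Real.sinh_pos_iff.2 hx
  unfold P0
  field_simp

lemma P1_eq {x : ℝ} (hx : 0 < x) :
    P1 x = Real.sinh x / (x * Real.cosh x - Real.sinh x) - 3 / x ^ 2 := by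
  have hs := Real.sinh_pos_iff.2 hx
  have hD : 0 < x * Real.cosh x - Real.sinh x := by linarith [sinh_lt_mul_cosh hx]
  unfold P1
  rw [P0_eq hx]
  field_simp

/-- For every `R > 0`,
`R²·P₀(R) + 1 + 6·P₀(R) − 1/P₀(R) = R³·P₀(R)·P₁'(R)`. -/
theorem stmt14 (R : ℝ) (hR : 0 < R) :
    R ^ 2 * P0 R + 1 + 6 * P0 R - 1 / P0 R = R ^ 3 * P0 R * deriv P1 R := by
  have hs := Real.sinh_pos_iff.2 hR
  have hD : 0 < R * Real.cosh R - Real.sinh R := by linarith [sinh_lt_mul_cosh hR]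
  have hRne : R ≠ 0 := hR.ne'
  have hDne : R * Real.cosh R - Real.sinh R ≠ 0 := hD.ne'
  have heq : P1 =ᶠ[nhds R] fun x => Real.sinh x / (x * Real.cosh x - Real.sinh x) - 3 / x ^ 2 := by
    filter_upwards [eventually_gt_nhds hR] with x hx
    exact P1_eq hx
  have hd : HasDerivAt (fun x => Real.sinh x / (x * Real.cosh x - Real.sinh x) - 3 / x ^ 2)
      ((Real.cosh R * (R * Real.cosh R - Real.sinh R) -
        Real.sinh R * (1 * Real.cosh R + R * Real.sinh R - Real.cosh R)) /
        (R * Real.cosh R - Real.sinh R) ^ 2 -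
       (0 * R ^ 2 - 3 * (↑2 * R ^ (2 - 1))) / (R ^ 2) ^ 2) R := by
    exact ((Real.hasDerivAt_sinh R).div
      (((hasDerivAt_id R).mul (Real.hasDerivAt_cosh R)).sub (Real.hasDerivAt_sinh R)) hDne).sub
      ((hasDerivAt_const R 3).div (hasDerivAt_pow 2 R) (pow_ne_zero 2 hRne))
  have hderiv : deriv P1 R = (Real.cosh R * (R * Real.cosh R - Real.sinh R) -
        Real.sinh R * (1 * Real.cosh R + R * Real.sinh R - Real.cosh R)) /
        (R * Real.cosh R - Real.sinh R) ^ 2 -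
       (0 * R ^ 2 - 3 * (↑2 * R ^ (2 - 1))) / (R ^ 2) ^ 2 := by
    rw [heq.deriv_eq]
    exact hd.deriv
  rw [hderiv, P0_eq hR]
  have hc : Real.cosh R ^ 2 = Real.sinh R ^ 2 + 1 := Real.cosh_sq R
  field_simp
  rw [show (2:ℕ) - 1 = 1 from rfl]
  ring
end
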